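/- Let G be a finite group with G' = {1, s}, s central of order 2, let K be a field with char K ∤ |G|, let x ∈ G be noncentral, and let H = ⟨Z(G), x⟩. Then the number of K-classes of G consisting of conjugacy classes of the form {ax, sax} with a ∈ Z(G) equals the number of K-classes of H/⟨s⟩ minus the number of K-classes of Z(G)/⟨s⟩. -/

import Mathlib

/-- Let `G` be a finite group with commutator subgroup `{1, s}`, `s` central of order two,
`x ∈ G` noncentral and `H = ⟨Z(G), x⟩`.  The `K`-classes are the orbits under the power
maps `g ↦ g^r` for `r` in a multiplicatively closed set `T` of odd exponents whose induced
relation is symmetric.  Then the number of `K`-classes of `G` consisting of conjugacy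
classes of the form `{a·x, s·a·x}` with `a ∈ Z(G)` equals the number of `K`-classes of
`H/⟨s⟩` minus the number of `K`-classes of `Z(G)/⟨s⟩`. -/
theorem card_classes_involving_x {G : Type*} [Group G] [Finite G] (s : G)
    (hs : s ∈ Subgroup.center G) (hs1 : s ≠ 1)
    (hcomm : (commutator G : Set G) = {1, s})
    (x : G) (hx : x ∉ Subgroup.center G)
    (H : Subgroup G) (hH : H = Subgroup.closure ((Subgroup.center G : Set G) ∪ {x}))
    (T : Submonoid ℕ)
    (hTodd : ∀ r ∈ T, Odd r)
    (hTsym : ∀ g : G, ∀ r ∈ T, ∃ r' ∈ T, (g ^ r) ^ r' = g)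
    [hnorm : (Subgroup.zpowers s).Normal] :
    Set.ncard {S : Set G | ∃ a ∈ Subgroup.center G,
        S = {v | ∃ r ∈ T, v = (a * x) ^ r ∨ v = s * (a * x) ^ r}} =
      Set.ncard {S : Set (G ⧸ Subgroup.zpowers s) | ∃ h ∈ H,
          S = {v | ∃ r ∈ T, v = (QuotientGroup.mk h : G ⧸ Subgroup.zpowers s) ^ r}} -
        Set.ncard {S : Set (G ⧸ Subgroup.zpowers s) | ∃ a ∈ Subgroup.center G,
          S = {v | ∃ r ∈ T, v = (QuotientGroup.mk a : G ⧸ Subgroup.zpowers s) ^ r}} := by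
  have hZc : ∀ a ∈ Subgroup.center G, ∀ g : G, a * g = g * a := fun a ha g =>
    ((Subgroup.mem_center_iff.mp ha) g).symm
  -- s has order 2
  have hsmem : s ∈ commutator G := by
    have : s ∈ (commutator G : Set G) := by rw [hcomm]; exact Or.inr rfl
    exact this
  have hs2 : s * s = 1 := by
    have h2 : s * s ∈ (commutator G : Set G) := mul_mem hsmem hsmem
    rw [hcomm] at h2
    rcases h2 with h | h
    · exact h
    · exact absurd (mul_left_cancel (h.trans (mul_one s).symm)) hs1
  -- commutation relation with x
  have hcom : ∀ g : G, x * g = g * x ∨ x * g = s * (g * x) := by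
    intro g
    have h : (open scoped commutatorElement in ⁅x, g⁆) ∈ (commutator G : Set G) := by
      rw [commutator_def]
      exact Subgroup.commutator_mem_commutator (Subgroup.mem_top x) (Subgroup.mem_top g)
    rw [hcomm] at h
    rw [commutatorElement_def] at h
    have hkey : x * g = (x * g * x⁻¹ * g⁻¹) * (g * x) := by group
    rcases h with h | h
    · left; rw [hkey, h, one_mul]
    · right; rw [hkey, h]
  -- x^2 is central
  have hx2 : x * x ∈ Subgroup.center G := by
    rw [Subgroup.mem_center_iff]
    intro g
    rcases hcom g with h | h
    · calc g * (x * x) = (g * x) * x := by group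
        _ = (x * g) * x := by rw [← h]
        _ = x * (g * x) := by group
        _ = x * (x * g) := by rw [← h]
        _ = (x * x) * g := by group
    · refine Eq.symm ?_
      calc (x * x) * g = x * (x * g) := by group
        _ = x * (s * (g * x)) := by rw [h]
        _ = (x * s) * (g * x) := by group
        _ = (s * x) * (g * x) := by rw [← hZc s hs x]
        _ = s * ((x * g) * x) := by group
        _ = s * ((s * (g * x)) * x) := by rw [h]
        _ = (s * s) * (g * (x * x)) := by group
        _ = g * (x * x) := by rw [hs2, one_mul]
  -- odd powers of a*x
  have hpow : ∀ a ∈ Subgroup.center G, ∀ r : ℕ, Odd r →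
      ∃ b ∈ Subgroup.center G, (a * x) ^ r = b * x := by
    intro a ha r hr
    obtain ⟨m, hm⟩ := hr
    have hsq : (a * x) ^ 2 ∈ Subgroup.center G := by
      have h2 : (a * x) ^ 2 = (a * a) * (x * x) := by
        rw [pow_two]
        calc a * x * (a * x) = a * (x * a) * x := by group
          _ = a * (a * x) * x := by rw [← hZc a ha x]
          _ = (a * a) * (x * x) := by group
      rw [h2]; exact mul_mem (mul_mem ha ha) hx2
    refine ⟨(a * x) ^ (2 * m) * a, mul_mem (by rw [pow_mul]; exact pow_mem hsq m) ha, ?_⟩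
    rw [hm, pow_add, pow_one, ← mul_assoc]
  -- characterization of H
  have hHmem : ∀ h : G, h ∈ H →
      (h ∈ Subgroup.center G ∨ ∃ a ∈ Subgroup.center G, h = a * x) := by
    rw [hH]
    intro h hh
    induction hh using Subgroup.closure_induction with
    | mem g hg =>
      rcases hg with hg | hg
      · exact Or.inl hg
      · exact Or.inr ⟨1, one_mem _, by simp only [Set.mem_singleton_iff] at hg; simp [hg]⟩
    | one => exact Or.inl (one_mem _)
    | mul g1 g2 _ _ ih1 ih2 =>
      rcases ih1 with h1 | ⟨a, ha, rfl⟩ <;> rcases ih2 with h2 | ⟨b, hb, rfl⟩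
      · exact Or.inl (mul_mem h1 h2)
      · exact Or.inr ⟨g1 * b, mul_mem h1 hb, by group⟩
      · refine Or.inr ⟨a * g2, mul_mem ha h2, ?_⟩
        calc (a * x) * g2 = a * (x * g2) := by group
          _ = a * (g2 * x) := by rw [← hZc g2 h2 x]
          _ = (a * g2) * x := by group
      · refine Or.inl ?_
        have he : (a * x) * (b * x) = (a * b) * (x * x) := by
          calc (a * x) * (b * x) = a * (x * b) * x := by group
            _ = a * (b * x) * x := by rw [← hZc b hb x]
            _ = (a * b) * (x * x) := by group
        rw [he]; exact mul_mem (mul_mem ha hb) hx2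
    | inv g _ ih =>
      rcases ih with h1 | ⟨a, ha, rfl⟩
      · exact Or.inl (inv_mem h1)
      · refine Or.inr ⟨a⁻¹ * (x * x)⁻¹, mul_mem (inv_mem ha) (inv_mem hx2), ?_⟩
        have hg : a⁻¹ * (x * x)⁻¹ * x = a⁻¹ * x⁻¹ := by group
        rw [hg, mul_inv_rev]
        exact (hZc a⁻¹ (inv_mem ha) x⁻¹).symm
  have hZH : ∀ a ∈ Subgroup.center G, a ∈ H := fun a ha => by
    rw [hH]; exact Subgroup.subset_closure (Or.inl ha)
  have hxH : x ∈ H := by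
    rw [hH]; exact Subgroup.subset_closure (Or.inr rfl)
  -- elements of ⟨s⟩
  have hzp : ∀ g ∈ Subgroup.zpowers s, g = 1 ∨ g = s := by
    intro g hg
    obtain ⟨k, rfl⟩ := Subgroup.mem_zpowers_iff.mp hg
    have hs2' : s ^ (2 : ℤ) = 1 := by rw [zpow_two]; exact hs2
    rcases Int.even_or_odd k with ⟨m, rfl⟩ | ⟨m, rfl⟩
    · left; rw [show m + m = 2 * m by ring, zpow_mul, hs2', one_zpow]
    · right; rw [zpow_add, zpow_one, zpow_mul, hs2', one_zpow, one_mul]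
  -- quotient equality
  have hmk : ∀ v w : G,
      ((v : G ⧸ Subgroup.zpowers s) = (w : G ⧸ Subgroup.zpowers s)) ↔ (v = w ∨ v = s * w) := by
    intro v w
    rw [QuotientGroup.eq]
    constructor
    · intro hvw
      rcases hzp _ hvw with h | h
      · exact Or.inl (inv_mul_eq_one.mp h)
      · right
        have hw : w = v * s := by rwa [inv_mul_eq_iff_eq_mul] at h
        rw [hw, ← hZc s hs v, ← mul_assoc, hs2, one_mul]
    · rintro (rfl | rfl)
      · rw [inv_mul_cancel]; exact one_mem _
      · have h1 : (s * w)⁻¹ * w = w⁻¹ * (s⁻¹ * w) := by group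
        rw [h1, hZc s⁻¹ (inv_mem hs) w, ← mul_assoc, inv_mul_cancel, one_mul]
        exact inv_mem (Subgroup.mem_zpowers s)
  have hmks : ((s : G) : G ⧸ Subgroup.zpowers s) = 1 :=
    (QuotientGroup.eq_one_iff s).mpr (Subgroup.mem_zpowers s)
  -- name the three sets
  set A : Set (Set G) := {S | ∃ a ∈ Subgroup.center G,
      S = {v | ∃ r ∈ T, v = (a * x) ^ r ∨ v = s * (a * x) ^ r}} with hA
  set B : Set (Set (G ⧸ Subgroup.zpowers s)) := {S | ∃ h ∈ H,
      S = {v | ∃ r ∈ T, v = (QuotientGroup.mk h : G ⧸ Subgroup.zpowers s) ^ r}} with hB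
  set C : Set (Set (G ⧸ Subgroup.zpowers s)) := {S | ∃ a ∈ Subgroup.center G,
      S = {v | ∃ r ∈ T, v = (QuotientGroup.mk a : G ⧸ Subgroup.zpowers s) ^ r}} with hC
  set B' : Set (Set (G ⧸ Subgroup.zpowers s)) := {S | ∃ a ∈ Subgroup.center G,
      S = {v | ∃ r ∈ T, v = (QuotientGroup.mk (a * x) : G ⧸ Subgroup.zpowers s) ^ r}} with hB'
  -- B = B' ∪ C
  have hBsplit : B = B' ∪ C := by
    ext S
    simp only [hB, hB', hC, Set.mem_union, Set.mem_setOf_eq]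
    constructor
    · rintro ⟨h, hh, rfl⟩
      rcases hHmem h hh with hcen | ⟨a, ha, rfl⟩
      · exact Or.inr ⟨h, hcen, rfl⟩
      · exact Or.inl ⟨a, ha, rfl⟩
    · rintro (⟨a, ha, rfl⟩ | ⟨a, ha, rfl⟩)
      · exact ⟨a * x, mul_mem (hZH a ha) hxH, rfl⟩
      · exact ⟨a, hZH a ha, rfl⟩
  -- B' and C are disjoint
  have hdis : Disjoint B' C := by
    rw [Set.disjoint_left]
    rintro S hSB' hSC
    simp only [hB', hC, Set.mem_setOf_eq] at hSB' hSC
    obtain ⟨a, ha, rfl⟩ := hSB'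
    obtain ⟨b, hb, hSb⟩ := hSC
    have h1 : (QuotientGroup.mk (a * x) : G ⧸ Subgroup.zpowers s) ∈
        {v : G ⧸ Subgroup.zpowers s | ∃ r ∈ T,
          v = (QuotientGroup.mk (a * x) : G ⧸ Subgroup.zpowers s) ^ r} :=
      ⟨1, one_mem T, (pow_one _).symm⟩
    rw [hSb] at h1
    obtain ⟨r, _, hr1⟩ := h1
    rw [← QuotientGroup.mk_pow] at hr1
    rcases (hmk _ _).mp hr1 with h | h
    · apply hx
      have hxe : x = a⁻¹ * b ^ r := by rw [← h]; group
      rw [hxe]; exact mul_mem (inv_mem ha) (pow_mem hb r)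
    · apply hx
      have hxe : x = a⁻¹ * (s * b ^ r) := by rw [← h]; group
      rw [hxe]; exact mul_mem (inv_mem ha) (mul_mem hs (pow_mem hb r))
  -- image of a class under the quotient map
  have himg : ∀ a ∈ Subgroup.center G,
      (QuotientGroup.mk '' {v | ∃ r ∈ T, v = (a * x) ^ r ∨ v = s * (a * x) ^ r}
        : Set (G ⧸ Subgroup.zpowers s))
        = {v | ∃ r ∈ T, v = (QuotientGroup.mk (a * x) : G ⧸ Subgroup.zpowers s) ^ r} := by
    intro a ha
    ext w
    constructor
    · rintro ⟨v, ⟨r, hr, (rfl | rfl)⟩, rfl⟩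
      · exact ⟨r, hr, QuotientGroup.mk_pow _ _ _⟩
      · exact ⟨r, hr, by rw [QuotientGroup.mk_mul, hmks, one_mul, QuotientGroup.mk_pow]⟩
    · rintro ⟨r, hr, rfl⟩
      exact ⟨(a * x) ^ r, ⟨r, hr, Or.inl rfl⟩, (QuotientGroup.mk_pow _ _ _).symm⟩
  -- preimage
  have hpre : ∀ a ∈ Subgroup.center G,
      (QuotientGroup.mk ⁻¹' {v : G ⧸ Subgroup.zpowers s | ∃ r ∈ T,
          v = (QuotientGroup.mk (a * x) : G ⧸ Subgroup.zpowers s) ^ r})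
        = {v | ∃ r ∈ T, v = (a * x) ^ r ∨ v = s * (a * x) ^ r} := by
    intro a ha
    ext v
    simp only [Set.mem_preimage, Set.mem_setOf_eq]
    constructor
    · rintro ⟨r, hr, hv⟩
      rw [← QuotientGroup.mk_pow] at hv
      rcases (hmk _ _).mp hv with h | h
      · exact ⟨r, hr, Or.inl h⟩
      · exact ⟨r, hr, Or.inr h⟩
    · rintro ⟨r, hr, (rfl | rfl)⟩
      · exact ⟨r, hr, QuotientGroup.mk_pow _ _ _⟩
      · exact ⟨r, hr, by rw [QuotientGroup.mk_mul, hmks, one_mul, QuotientGroup.mk_pow]⟩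
  -- the image map is injective on A
  have hinj : Set.InjOn (fun S : Set G =>
      (QuotientGroup.mk '' S : Set (G ⧸ Subgroup.zpowers s))) A := by
    rintro S hSA S' hS'A himeq
    simp only [hA, Set.mem_setOf_eq] at hSA hS'A
    obtain ⟨a, ha, rfl⟩ := hSA
    obtain ⟨b, hb, rfl⟩ := hS'A
    simp only at himeq
    rw [himg a ha, himg b hb] at himeq
    rw [← hpre a ha, ← hpre b hb, himeq]
  -- image of A is B'
  have hAim : (fun S : Set G =>
      (QuotientGroup.mk '' S : Set (G ⧸ Subgroup.zpowers s))) '' A = B' := by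
    ext S
    simp only [hA, hB', Set.mem_image, Set.mem_setOf_eq]
    constructor
    · rintro ⟨S0, ⟨a, ha, rfl⟩, rfl⟩
      exact ⟨a, ha, himg a ha⟩
    · rintro ⟨a, ha, rfl⟩
      exact ⟨_, ⟨a, ha, rfl⟩, himg a ha⟩
  -- counting
  have h1 : A.ncard = B'.ncard := by
    rw [← hAim]
    exact (Set.ncard_image_of_injOn hinj).symm
  have h2 : B.ncard = B'.ncard + C.ncard := by
    rw [hBsplit]
    exact Set.ncard_union_eq hdis (Set.toFinite _) (Set.toFinite _)
  omega
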